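/- arXiv:2406.08944 — 2 statements merged into one kernel-verified Lean document; each statement's English description precedes it below -/
import Mathlib

section
/- The map F sending a two-colored oriented multigraph configuration ω (with red current r and blue current b on a fixed multigraph G_N) to the pair (ω_R, ω_B), where ω_R is obtained by painting all edges red (keeping orientations) and ω_B is obtained by reversing the orientations of red edges and painting all edges blue, is a bijection from {∂r = f, ∂b = g, |r+b| = N} onto {∂r' = f+g, |r'| = N} × {∂b' = −f+g, |b'| = N}. -/
open Finset

/-- A finite multigraph on vertex set `V`: a finite set of distinguishable
strands (edges), each with an unordered pair of distinct endpoints. -/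
structure MG (V : Type) where
  Strand : Type
  [fin : Fintype Strand]
  [dec : DecidableEq Strand]
  ends : Strand → Sym2 V
  noloop : ∀ s, ¬ (ends s).IsDiag

attribute [instance] MG.fin MG.dec

variable {V : Type} [Fintype V] [DecidableEq V]

/-- An oriented (one-colored) configuration on the multigraph `G`. -/
structure Config (G : MG V) where
  orient : G.Strand → V × V
  compat : ∀ s, Sym2.mk (orient s).1 (orient s).2 = G.ends s

/-- A two-colored oriented configuration on the multigraph `G`
(`red s = true` means the strand `s` is red, otherwise it is blue). -/
structure Config2 (G : MG V) where
  orient : G.Strand → V × V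
  red : G.Strand → Bool
  compat : ∀ s, Sym2.mk (orient s).1 (orient s).2 = G.ends s

/-- The current induced by an oriented configuration. -/
def Config.cur {G : MG V} (ω : Config G) (x y : V) : ℕ :=
  (univ.filter fun s => ω.orient s = (x, y)).card

/-- The red current of a two-colored configuration. -/
def Config2.redCur {G : MG V} (ω : Config2 G) (x y : V) : ℕ :=
  (univ.filter fun s => ω.orient s = (x, y) ∧ ω.red s = true).card

/-- The blue current of a two-colored configuration. -/
def Config2.blueCur {G : MG V} (ω : Config2 G) (x y : V) : ℕ :=
  (univ.filter fun s => ω.orient s = (x, y) ∧ ω.red s = false).card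

/-- The source function of a current. -/
def csrc (n : V → V → ℕ) (x : V) : ℤ :=
  ∑ y, ((n x y : ℤ) - n y x)

/-- The bijection `F`: paint everything red keeping orientations for the first
component; reverse red strands and paint everything blue for the second. -/
def F {G : MG V} (ω : Config2 G) : Config G × Config G :=
  (⟨ω.orient, ω.compat⟩,
   ⟨fun s => if ω.red s then (ω.orient s).swap else ω.orient s, by
      intro s
      by_cases h : ω.red s <;> simp [h, ← ω.compat s, Sym2.eq_swap]⟩)

-- auxiliary lemmas

lemma Config.ext' {G : MG V} {a b : Config G} (h : a.orient = b.orient) : a = b := by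
  cases a; cases b; cases h; rfl

lemma Config2.ext' {G : MG V} {a b : Config2 G} (h1 : a.orient = b.orient)
    (h2 : a.red = b.red) : a = b := by
  cases a; cases b; cases h1; cases h2; rfl

lemma orient_ne {G : MG V} (ω : Config2 G) (s : G.Strand) :
    (ω.orient s).1 ≠ (ω.orient s).2 := by
  intro h
  apply G.noloop s
  rw [← ω.compat s]
  exact Sym2.mk_isDiag_iff.mpr h

lemma cur_fst {G : MG V} (ω : Config2 G) (x y : V) :
    (F ω).1.cur x y = ω.redCur x y + ω.blueCur x y := by
  rw [Config2.redCur, Config2.blueCur]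
  have h := Finset.card_filter_add_card_filter_not
    (s := (univ : Finset G.Strand).filter fun s => ω.orient s = (x, y))
    (p := fun s => ω.red s = true)
  rw [Finset.filter_filter, Finset.filter_filter] at h
  rw [show (F ω).1.cur x y =
    ((univ : Finset G.Strand).filter fun s => ω.orient s = (x, y)).card from rfl, ← h]
  congr 2
  ext s
  simp

lemma cur_snd {G : MG V} (ω : Config2 G) (x y : V) :
    (F ω).2.cur x y = ω.redCur y x + ω.blueCur x y := by
  rw [Config2.redCur, Config2.blueCur, Config.cur]
  rw [show ((univ : Finset G.Strand).filter fun s => (F ω).2.orient s = (x, y)) =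
      (univ.filter fun s => (ω.orient s = (y, x) ∧ ω.red s = true) ∨
        (ω.orient s = (x, y) ∧ ω.red s = false)) by
    apply Finset.filter_congr
    intro s _
    show ((if ω.red s then (ω.orient s).swap else ω.orient s) = (x, y)) ↔ _
    by_cases h : ω.red s
    · simp [h, Prod.ext_iff, Prod.swap]
      constructor
      · rintro ⟨h1, h2⟩; exact ⟨h2, h1⟩
      · rintro ⟨h1, h2⟩; exact ⟨h2, h1⟩
    · simp [h]]
  rw [Finset.filter_or, Finset.card_union_of_disjoint]
  rw [Finset.disjoint_filter]
  rintro s _ ⟨-, hr⟩ ⟨-, hb⟩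
  simp [hr] at hb

lemma csrc_fst {G : MG V} (ω : Config2 G) (x : V) :
    csrc (F ω).1.cur x = csrc ω.redCur x + csrc ω.blueCur x := by
  simp only [csrc, cur_fst, ← Finset.sum_add_distrib]
  apply Finset.sum_congr rfl
  intro y _
  push_cast
  ring

lemma csrc_snd' {G : MG V} (ω : Config2 G) (x : V) :
    csrc (F ω).2.cur x = -csrc ω.redCur x + csrc ω.blueCur x := by
  simp only [csrc, cur_snd, ← Finset.sum_neg_distrib, ← Finset.sum_add_distrib]
  apply Finset.sum_congr rfl
  intro y _
  push_cast
  ring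

/-- The map `F`, sending a two-colored oriented configuration `ω` on `G_N` to
`(ω_R, ω_B)` (paint all red keeping orientations; reverse red strands and paint
all blue), is a bijection from `{∂r = f, ∂b = g}_N` onto
`{∂r' = f+g}_N × {∂b' = −f+g}_N`. -/
theorem F_bijOn (G : MG V) (f g : V → ℤ)
    (hf : ∑ v, f v = 0) (hg : ∑ v, g v = 0) :
    Set.BijOn (F (G := G))
      {ω : Config2 G | (∀ x, csrc ω.redCur x = f x) ∧ (∀ x, csrc ω.blueCur x = g x)}
      {p : Config G × Config G |
        (∀ x, csrc p.1.cur x = f x + g x) ∧ (∀ x, csrc p.2.cur x = -f x + g x)} := by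
  refine ⟨?_, ?_, ?_⟩
  · rintro ω ⟨hr, hb⟩
    exact ⟨fun x => by rw [csrc_fst, hr, hb], fun x => by rw [csrc_snd', hr, hb]⟩
  · intro a _ b _ h
    have ho : a.orient = b.orient := congrArg Config.orient (congrArg Prod.fst h)
    apply Config2.ext' ho
    funext s
    have h2 := congrArg (fun p => p.2.orient s) h
    simp only [F] at h2
    by_cases ha : a.red s <;> by_cases hb : b.red s <;>
      simp only [ha, hb, if_true, if_false, ho] at h2 ⊢
    · exact absurd (congrArg Prod.fst h2) (Ne.symm (orient_ne b s))
    · exact absurd (congrArg Prod.fst h2) (orient_ne b s)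
  · rintro ⟨ω₁, ω₂⟩ ⟨h1, h2⟩
    set ω : Config2 G := ⟨ω₁.orient, fun s => decide (ω₂.orient s ≠ ω₁.orient s),
      ω₁.compat⟩ with hω
    have hF : F ω = (ω₁, ω₂) := by
      refine Prod.ext (Config.ext' rfl) (Config.ext' ?_)
      funext s
      show (if ω.red s then (ω.orient s).swap else ω.orient s) = ω₂.orient s
      by_cases h : ω₂.orient s = ω₁.orient s
      · simp [hω, h]
      · have hmk : Sym2.mk (ω₁.orient s).1 (ω₁.orient s).2 = Sym2.mk (ω₂.orient s).1 (ω₂.orient s).2 := by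
          rw [ω₁.compat s, ω₂.compat s]
        rw [Sym2.mk_eq_mk_iff] at hmk
        rcases hmk with heq | heq
        · exact absurd heq.symm h
        · show (if decide (ω₂.orient s ≠ ω₁.orient s) = true
              then (ω₁.orient s).swap else ω₁.orient s) = ω₂.orient s
          rw [if_pos (by simpa using h), heq, Prod.swap_swap]
    refine ⟨ω, ⟨fun x => ?_, fun x => ?_⟩, hF⟩ <;>
    · have A := csrc_fst ω x
      have B := csrc_snd' ω x
      rw [hF] at A B
      have := h1 x
      have := h2 x
      omega
end

section
/- The partition function of the XY model on a finite graph satisfies Z = Σ_{n : ∂n = 0} w_J(n), where the sum runs over all currents n on oriented edges with zero source function and w_J(n) = Π_{oriented edges xy} (J_xy/2)^{n_{xy}} / n_{xy}!. -/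
set_option maxHeartbeats 1000000


open Finset MeasureTheory Real

variable {V : Type} [Fintype V] [DecidableEq V]

/-- The box `[0, 2π)^V` of angle configurations. -/
def box (V : Type) [Fintype V] : Set (V → ℝ) :=
  Set.univ.pi fun _ => Set.Ico 0 (2 * Real.pi)

/-- Minus the Hamiltonian of the XY model, in angle variables:
`−H(θ) = Σ_{xy∈E} J_xy cos(θ_x − θ_y)`, written as a sum over ordered pairs
(with `J` symmetric and `J x y = 0` if `xy` is not an edge). -/
noncomputable def energy (J : V → V → ℝ) (θ : V → ℝ) : ℝ :=
  (∑ x, ∑ y, J x y * Real.cos (θ x - θ y)) / 2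

/-- The partition function of the XY model:
`Z = ∫_{(S¹)^V} e^{−H} dσ` with `dσ` the uniform probability measure. -/
noncomputable def Z (J : V → V → ℝ) : ℝ :=
  (∫ θ in box V, Real.exp (energy J θ)) / (2 * Real.pi) ^ (Fintype.card V)

/-- The unnormalized correlation `Z·⟨σ^φ⟩ = ∫ Π_x σ_x^{φ_x} e^{−H} dσ`,
where `σ_x = e^{iθ_x}`. -/
noncomputable def U (J : V → V → ℝ) (φ : V → ℤ) : ℂ :=
  (∫ θ in box V,
      Complex.exp (Complex.I * ∑ x, (φ x : ℂ) * (θ x : ℂ)) * Real.exp (energy J θ)) /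
    ((2 * Real.pi : ℂ)) ^ (Fintype.card V)

/-- The correlation function `⟨σ^φ⟩ = Z·⟨σ^φ⟩ / Z`. -/
noncomputable def corr (J : V → V → ℝ) (φ : V → ℤ) : ℂ :=
  U J φ / (Z J : ℂ)

/-- The weight `w_J(n) = Π_{oriented edges} (J_xy/2)^{n_xy} / n_xy!` of a
current `n` (oriented edges are ordered pairs; pairs with `J x y = 0` or
`x = y` carry no weight unless `n` vanishes there). -/
noncomputable def wgt (J : V → V → ℝ) (n : V → V → ℕ) : ℝ :=
  ∏ x, ∏ y, (J x y / 2) ^ (n x y) / (n x y).factorial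

section helpers


private lemma summable_mul_pair {α β : Type*} (A : α → ℝ) (B : β → ℝ)
    (hA : Summable A) (hB : Summable B) (hA' : ∀ a, 0 ≤ A a) (hB' : ∀ b, 0 ≤ B b) :
    Summable (fun p : α × β => A p.1 * B p.2) :=
  hA.mul_of_nonneg hB hA' hB'

private lemma tsum_mul_tsum' {α β : Type*} (A : α → ℂ) (B : β → ℂ)
    (hA : Summable A) (hB : Summable B) (hAB : Summable (fun p : α × β => A p.1 * B p.2)) :
    (∑' a, A a) * ∑' b, B b = ∑' p : α × β, A p.1 * B p.2 :=
  Summable.tsum_mul_tsum hA hB hAB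

private lemma prod_tsum_fin : ∀ (m : ℕ) (f : Fin m → ℕ → ℂ), (∀ i, Summable fun k => ‖f i k‖) →
    Summable (fun g : Fin m → ℕ => ∏ i, ‖f i (g i)‖) ∧
    (∑' g : Fin m → ℕ, ∏ i, f i (g i)) = ∏ i, ∑' k, f i k := by
  intro m
  induction m with
  | zero =>
    intro f _
    have h1 : HasSum (fun g : Fin 0 → ℕ => ∏ i, ‖f i (g i)‖) 1 := by
      have := hasSum_single (f := fun g : Fin 0 → ℕ => ∏ i, ‖f i (g i)‖)
        (default : Fin 0 → ℕ) (fun b hb => absurd (Subsingleton.elim b default) hb)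
      simpa using this
    have h2 : HasSum (fun g : Fin 0 → ℕ => ∏ i, f i (g i)) 1 := by
      have := hasSum_single (f := fun g : Fin 0 → ℕ => ∏ i, f i (g i))
        (default : Fin 0 → ℕ) (fun b hb => absurd (Subsingleton.elim b default) hb)
      simpa using this
    exact ⟨h1.summable, by simp [h2.tsum_eq]⟩
  | succ m ih =>
    intro f hf
    obtain ⟨ihs, ihe⟩ := ih (fun i => f i.succ) (fun i => hf i.succ)
    have hn0 := hf 0
    have hsum2 : Summable (fun p : ℕ × (Fin m → ℕ) => ‖f 0 p.1‖ * ∏ i, ‖f i.succ (p.2 i)‖) := by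
      have H := summable_mul_pair _ _ hn0 ihs (fun k => norm_nonneg _)
        (fun g => Finset.prod_nonneg fun i _ => norm_nonneg _)
      exact H
    set e := (Fin.consEquiv (fun _ : Fin (m+1) => ℕ)).symm with he
    have hptwise : ∀ p : ℕ × (Fin m → ℕ),
        (∏ i, ‖f i (e.symm p i)‖) = ‖f 0 p.1‖ * ∏ i, ‖f i.succ (p.2 i)‖ := by
      intro p
      rw [Fin.prod_univ_succ]
      simp [he, Fin.consEquiv]
    have hsummable : Summable (fun g : Fin (m+1) → ℕ => ∏ i, ‖f i (g i)‖) := by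
      rw [← (e.symm.summable_iff (f := fun g : Fin (m+1) → ℕ => ∏ i, ‖f i (g i)‖))]
      exact hsum2.congr fun p => (hptwise p).symm
    refine ⟨hsummable, ?_⟩
    have hC0 : Summable (f 0) := hn0.of_norm
    have hCs : Summable (fun g : Fin m → ℕ => ∏ i, f i.succ (g i)) := by
      refine Summable.of_norm (ihs.congr fun g => ?_)
      rw [norm_prod]
    have hCp : Summable (fun p : ℕ × (Fin m → ℕ) => f 0 p.1 * ∏ i, f i.succ (p.2 i)) := by
      refine Summable.of_norm (hsum2.congr fun p => ?_)
      rw [norm_mul, norm_prod]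
    calc (∑' g : Fin (m+1) → ℕ, ∏ i, f i (g i))
        = ∑' p : ℕ × (Fin m → ℕ), ∏ i, f i (e.symm p i) := (e.symm.tsum_eq _).symm
      _ = ∑' p : ℕ × (Fin m → ℕ), f 0 p.1 * ∏ i, f i.succ (p.2 i) := by
          refine tsum_congr fun p => ?_
          rw [Fin.prod_univ_succ]
          simp [he, Fin.consEquiv]
      _ = (∑' k, f 0 k) * ∑' g : Fin m → ℕ, ∏ i, f i.succ (g i) := by
          have H := tsum_mul_tsum' _ _ hC0 hCs hCp
          exact H.symm
      _ = ∏ i, ∑' k, f i k := by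
          rw [ihe, Fin.prod_univ_succ]

private lemma prod_tsum_fintype {ι : Type} [Fintype ι] (f : ι → ℕ → ℂ)
    (hf : ∀ i, Summable fun k => ‖f i k‖) :
    Summable (fun g : ι → ℕ => ∏ i, ‖f i (g i)‖) ∧
    (∑' g : ι → ℕ, ∏ i, f i (g i)) = ∏ i, ∑' k, f i k := by
  obtain ⟨e⟩ : Nonempty (ι ≃ Fin (Fintype.card ι)) := ⟨Fintype.equivFin ι⟩
  obtain ⟨hs, he⟩ := prod_tsum_fin (Fintype.card ι) (fun j k => f (e.symm j) k)
    (fun j => hf _)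
  set E : (ι → ℕ) ≃ (Fin (Fintype.card ι) → ℕ) := Equiv.arrowCongr e (Equiv.refl ℕ) with hE
  have hEapp : ∀ (h : Fin (Fintype.card ι) → ℕ) (i : ι), (E.symm h) i = h (e i) := by
    intro h i; simp [hE, Equiv.arrowCongr]
  have hptN : ∀ h : Fin (Fintype.card ι) → ℕ,
      (∏ i, ‖f i (E.symm h i)‖) = ∏ j, ‖f (e.symm j) (h j)‖ := by
    intro h
    rw [← Equiv.prod_comp e.symm (fun i => ‖f i (E.symm h i)‖)]
    refine Finset.prod_congr rfl fun j _ => ?_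
    rw [hEapp, Equiv.apply_symm_apply]
  have hptC : ∀ h : Fin (Fintype.card ι) → ℕ,
      (∏ i, f i (E.symm h i)) = ∏ j, f (e.symm j) (h j) := by
    intro h
    rw [← Equiv.prod_comp e.symm (fun i => f i (E.symm h i))]
    refine Finset.prod_congr rfl fun j _ => ?_
    rw [hEapp, Equiv.apply_symm_apply]
  constructor
  · rw [← (E.symm.summable_iff (f := fun g : ι → ℕ => ∏ i, ‖f i (g i)‖))]
    exact hs.congr fun h => (hptN h).symm
  · calc (∑' g : ι → ℕ, ∏ i, f i (g i))
        = ∑' h : Fin (Fintype.card ι) → ℕ, ∏ i, f i (E.symm h i) := (E.symm.tsum_eq _).symm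
      _ = ∑' h : Fin (Fintype.card ι) → ℕ, ∏ j, f (e.symm j) (h j) := tsum_congr hptC
      _ = ∏ j, ∑' k, f (e.symm j) k := he
      _ = ∏ i, ∑' k, f i k := Equiv.prod_comp e.symm (fun i => ∑' k, f i k)

private lemma oneDim (k : ℤ) :
    ∫ t in Set.Ico (0:ℝ) (2 * π), Complex.exp (Complex.I * k * t)
      = if k = 0 then ((2 * π : ℝ) : ℂ) else 0 := by
  have h0 : (0:ℝ) ≤ 2 * π := by positivity
  rw [setIntegral_congr_set Ico_ae_eq_Ioc, ← intervalIntegral.integral_of_le h0]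
  by_cases hk : k = 0
  · subst hk
    simp
  · rw [if_neg hk]
    have hc : (Complex.I * k : ℂ) ≠ 0 := by
      simp [Complex.I_ne_zero, hk]
    have := integral_exp_mul_complex (a := 0) (b := 2 * π) hc
    rw [this,
      show (Complex.I * k * ((2 * π : ℝ) : ℂ) : ℂ) = k * (2 * π * Complex.I) by push_cast; ring,
      Complex.exp_int_mul_two_pi_mul_I]
    simp


private lemma box_meas : MeasurableSet (box V) :=
  MeasurableSet.univ_pi fun _ => measurableSet_Ico

private lemma box_vol : (volume (box V)) = ENNReal.ofReal (2 * π) ^ (Fintype.card V) := by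
  rw [show box V = Set.univ.pi fun _ : V => Set.Ico (0:ℝ) (2 * π) from rfl, volume_pi_pi]
  simp [Real.volume_Ico]

private lemma boxInt (c : V → ℤ) :
    (∫ θ in box V, Complex.exp (Complex.I * ∑ x, (c x : ℂ) * (θ x : ℂ)))
      = if (∀ x, c x = 0) then (((2 * π) ^ (Fintype.card V) : ℝ) : ℂ) else 0 := by
  have hsplit : ∀ θ : V → ℝ, Complex.exp (Complex.I * ∑ x, (c x : ℂ) * (θ x : ℂ))
      = ∏ x, Complex.exp (Complex.I * c x * (θ x : ℂ)) := by
    intro θ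
    rw [← Complex.exp_sum]
    congr 1
    rw [Finset.mul_sum]
    exact Finset.sum_congr rfl fun x _ => by ring
  simp_rw [hsplit]
  rw [← integral_indicator box_meas]
  have hind : ∀ θ : V → ℝ, (box V).indicator
        (fun θ : V → ℝ => ∏ x, Complex.exp (Complex.I * c x * (θ x : ℂ))) θ
      = ∏ x, (Set.Ico (0:ℝ) (2 * π)).indicator
          (fun t : ℝ => Complex.exp (Complex.I * c x * (t : ℂ))) (θ x) := by
    intro θ
    by_cases h : θ ∈ box V
    · rw [Set.indicator_of_mem h]
      refine Finset.prod_congr rfl fun x _ => ?_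
      rw [Set.indicator_of_mem (h x (Set.mem_univ x))]
    · rw [Set.indicator_of_notMem h]
      have : ∃ x, θ x ∉ Set.Ico (0:ℝ) (2 * π) := by
        by_contra hx
        push_neg at hx
        exact h fun x _ => hx x
      obtain ⟨x, hx⟩ := this
      symm
      refine Finset.prod_eq_zero (Finset.mem_univ x) ?_
      rw [Set.indicator_of_notMem hx]
  rw [integral_congr_ae (Filter.Eventually.of_forall hind)]
  rw [MeasureTheory.integral_fintype_prod_volume_eq_prod (ι := V)
    (f := fun x (t : ℝ) => (Set.Ico (0:ℝ) (2 * π)).indicator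
      (fun t : ℝ => Complex.exp (Complex.I * c x * (t : ℂ))) t)]
  have hone : ∀ x, (∫ t : ℝ, (Set.Ico (0:ℝ) (2 * π)).indicator
      (fun t : ℝ => Complex.exp (Complex.I * c x * (t : ℂ))) t)
      = if c x = 0 then ((2 * π : ℝ) : ℂ) else 0 := by
    intro x
    rw [integral_indicator measurableSet_Ico]
    exact oneDim (c x)
  rw [Finset.prod_congr rfl fun x _ => hone x]
  by_cases hc : ∀ x, c x = 0
  · rw [if_pos hc]
    rw [Finset.prod_congr rfl fun x _ => if_pos (hc x)]
    rw [Finset.prod_const]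
    push_cast
    rfl
  · rw [if_neg hc]
    push_neg at hc
    obtain ⟨x, hx⟩ := hc
    exact Finset.prod_eq_zero (Finset.mem_univ x) (if_neg hx)

private lemma exp_add_exp_neg (t : ℝ) :
    Complex.exp (Complex.I * t) + Complex.exp (-(Complex.I * t)) = 2 * (Real.cos t : ℂ) := by
  rw [Complex.ofReal_cos,
    show Complex.I * (t:ℂ) = (t:ℂ) * Complex.I by ring, Complex.exp_mul_I,
    show -((t:ℂ) * Complex.I) = (-(t:ℂ)) * Complex.I by ring, Complex.exp_mul_I,
    Complex.cos_neg, Complex.sin_neg]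
  ring

private lemma sum_half_exp (J : V → V → ℝ) (hsym : ∀ x y, J x y = J y x) (θ : V → ℝ) :
    ∑ x, ∑ y, ((J x y / 2 : ℝ) : ℂ) * Complex.exp (Complex.I * ((θ x : ℂ) - (θ y : ℂ)))
      = ((energy J θ : ℝ) : ℂ) := by
  set c : V → V → ℂ := fun x y =>
    ((J x y / 2 : ℝ) : ℂ) * Complex.exp (Complex.I * ((θ x : ℂ) - (θ y : ℂ))) with hc
  have hswap : (∑ x, ∑ y, c x y) = ∑ x, ∑ y, c y x := by
    rw [Finset.sum_comm]
  have hdouble : (∑ x, ∑ y, c x y) + (∑ x, ∑ y, c x y)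
      = ∑ x, ∑ y, ((J x y : ℝ) : ℂ) * (Real.cos (θ x - θ y) : ℂ) := by
    nth_rewrite 2 [hswap]
    rw [← Finset.sum_add_distrib]
    refine Finset.sum_congr rfl fun x _ => ?_
    rw [← Finset.sum_add_distrib]
    refine Finset.sum_congr rfl fun y _ => ?_
    show ((J x y / 2 : ℝ) : ℂ) * Complex.exp (Complex.I * ((θ x : ℂ) - (θ y : ℂ))) +
        ((J y x / 2 : ℝ) : ℂ) * Complex.exp (Complex.I * ((θ y : ℂ) - (θ x : ℂ)))
        = ((J x y : ℝ) : ℂ) * (Real.cos (θ x - θ y) : ℂ)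
    rw [hsym y x,
      show Complex.I * ((θ y:ℂ) - θ x) = -(Complex.I * ((θ x:ℂ) - θ y)) by ring]
    have h2 := exp_add_exp_neg (θ x - θ y)
    rw [show ((↑(θ x - θ y) : ℂ)) = (θ x : ℂ) - (θ y : ℂ) by push_cast; ring] at h2
    push_cast
    push_cast at h2
    linear_combination ((J x y : ℂ) / 2) * h2
  have h3 : (2 : ℂ) * (∑ x, ∑ y, c x y)
      = ∑ x, ∑ y, ((J x y : ℝ) : ℂ) * (Real.cos (θ x - θ y) : ℂ) := by
    rw [two_mul]; exact hdouble
  have h4 : ((energy J θ : ℝ) : ℂ)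
      = (∑ x, ∑ y, ((J x y : ℝ) : ℂ) * (Real.cos (θ x - θ y) : ℂ)) / 2 := by
    rw [energy]
    push_cast
    ring
  rw [h4, ← h3]
  ring

private lemma norm_f (J : V → V → ℝ) (hpos : ∀ x y, 0 ≤ J x y) (θ : V → ℝ)
    (p : V × V) (k : ℕ) :
    ‖(((J p.1 p.2 / 2 : ℝ) : ℂ) *
        Complex.exp (Complex.I * ((θ p.1 : ℂ) - (θ p.2 : ℂ)))) ^ k / (k.factorial : ℂ)‖
      = (J p.1 p.2 / 2) ^ k / (k.factorial : ℝ) := by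
  rw [norm_div, norm_pow, norm_mul]
  have h1 : ‖Complex.exp (Complex.I * ((θ p.1 : ℂ) - (θ p.2 : ℂ)))‖ = 1 := by
    rw [Complex.norm_exp]
    simp [Complex.mul_re]
  have h2 : ‖((J p.1 p.2 / 2 : ℝ) : ℂ)‖ = J p.1 p.2 / 2 := by
    rw [Complex.norm_real, Real.norm_of_nonneg (div_nonneg (hpos _ _) (by norm_num))]
  have h3 : ‖((k.factorial : ℕ) : ℂ)‖ = (k.factorial : ℝ) := by
    simp
  rw [h1, h2, h3, mul_one]

private noncomputable def fC (J : V → V → ℝ) (θ : V → ℝ) (p : V × V) (k : ℕ) : ℂ :=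
  (((J p.1 p.2 / 2 : ℝ) : ℂ) * Complex.exp (Complex.I * ((θ p.1 : ℂ) - (θ p.2 : ℂ)))) ^ k
    / (k.factorial : ℂ)

private lemma sum_current (n : V → V → ℕ) (θ : V → ℝ) :
    ∑ x, ∑ y, (n x y : ℂ) * ((θ x : ℂ) - (θ y : ℂ)) = ∑ x, (csrc n x : ℂ) * (θ x : ℂ) := by
  have h1 : ∀ x, ((csrc n x : ℤ) : ℂ) * (θ x : ℂ)
      = ∑ y, ((n x y : ℂ) * θ x - (n y x : ℂ) * θ x) := by
    intro x
    rw [csrc]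
    push_cast
    rw [Finset.sum_mul]
    exact Finset.sum_congr rfl fun y _ => by ring
  simp_rw [h1, mul_sub, Finset.sum_sub_distrib]
  congr 1
  rw [Finset.sum_comm]

private lemma expand_key (J : V → V → ℝ) (hsym : ∀ x y, J x y = J y x)
    (hpos : ∀ x y, 0 ≤ J x y) (θ : V → ℝ) :
    Summable (fun n : V → V → ℕ => wgt J n) ∧
    ((Real.exp (energy J θ) : ℝ) : ℂ)
      = ∑' n : V → V → ℕ, (wgt J n : ℂ) *
          Complex.exp (Complex.I * ∑ x, (csrc n x : ℂ) * (θ x : ℂ)) := by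
  have hf : ∀ p, Summable fun k => ‖fC J θ p k‖ := by
    intro p
    exact (Real.summable_pow_div_factorial (J p.1 p.2 / 2)).congr
      (fun k => (norm_f J hpos θ p k).symm)
  obtain ⟨hS, hE⟩ := prod_tsum_fintype (fC J θ) hf
  have hfactor : (∏ p : V × V, ∑' k, fC J θ p k) = ((Real.exp (energy J θ) : ℝ) : ℂ) := by
    have h1 : ∀ p : V × V, (∑' k, fC J θ p k) = Complex.exp
        (((J p.1 p.2 / 2 : ℝ) : ℂ) * Complex.exp (Complex.I * ((θ p.1 : ℂ) - (θ p.2 : ℂ)))) := by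
      intro p
      have h2 : ∀ z : ℂ, Complex.exp z = ∑' n : ℕ, z ^ n / n.factorial := by
        intro z; rw [Complex.exp_eq_exp_ℂ, NormedSpace.exp_eq_tsum_div]
      rw [h2]
      exact tsum_congr fun k => by rw [fC]
    rw [Finset.prod_congr rfl (fun p _ => h1 p), ← Complex.exp_sum,
      Fintype.sum_prod_type, sum_half_exp J hsym θ, Complex.ofReal_exp]
  have hterm : ∀ g : V × V → ℕ, (∏ p, fC J θ p (g p))
      = ((wgt J (fun x y => g (x, y)) : ℝ) : ℂ) *
          Complex.exp (Complex.I * ∑ x, (csrc (fun x y => g (x, y)) x : ℂ) * (θ x : ℂ)) := by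
    intro g
    have e1 : ∀ p : V × V, fC J θ p (g p)
        = (((J p.1 p.2 / 2) ^ (g p) / ((g p).factorial : ℝ) : ℝ) : ℂ) *
            Complex.exp (((g p : ℕ) : ℂ) * (Complex.I * ((θ p.1 : ℂ) - (θ p.2 : ℂ)))) := by
      intro p
      rw [fC, mul_pow, ← Complex.exp_nat_mul]
      push_cast
      ring
    rw [Finset.prod_congr rfl (fun p _ => e1 p), Finset.prod_mul_distrib,
      ← Complex.ofReal_prod, ← Complex.exp_sum]
    congr 1
    · rw [wgt]
      exact congrArg Complex.ofReal (Fintype.prod_prod_type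
        (f := fun p : V × V => (J p.1 p.2 / 2) ^ (g p) / ((g p).factorial : ℝ)))
    · have : ∑ p : V × V, ((g p : ℕ) : ℂ) * (Complex.I * ((θ p.1 : ℂ) - (θ p.2 : ℂ)))
          = Complex.I * ∑ p : V × V, ((g p : ℕ) : ℂ) * ((θ p.1 : ℂ) - (θ p.2 : ℂ)) := by
        rw [Finset.mul_sum]
        exact Finset.sum_congr rfl fun p _ => by ring
      rw [this, Fintype.sum_prod_type, sum_current (fun x y => g (x, y)) θ]
  constructor
  · have hww : ∀ g : V × V → ℕ, (∏ p, ‖fC J θ p (g p)‖) = wgt J (fun x y => g (x, y)) := by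
      intro g
      rw [wgt]
      have h2 := Fintype.prod_prod_type
        (f := fun p : V × V => (J p.1 p.2 / 2) ^ (g p) / ((g p).factorial : ℝ))
      calc (∏ p, ‖fC J θ p (g p)‖)
          = ∏ p : V × V, (J p.1 p.2 / 2) ^ (g p) / ((g p).factorial : ℝ) :=
            Finset.prod_congr rfl fun p _ => norm_f J hpos θ p (g p)
        _ = ∏ x, ∏ y, (J x y / 2) ^ (g (x, y)) / ((g (x, y)).factorial : ℝ) := h2
    have h := (Equiv.curry V V ℕ).summable_iff (f := fun n : V → V → ℕ => wgt J n)
    rw [← h]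
    exact hS.congr hww
  · calc ((Real.exp (energy J θ) : ℝ) : ℂ)
        = ∏ p : V × V, ∑' k, fC J θ p k := hfactor.symm
      _ = ∑' g : V × V → ℕ, ∏ p, fC J θ p (g p) := hE.symm
      _ = ∑' g : V × V → ℕ, ((wgt J (fun x y => g (x, y)) : ℝ) : ℂ) *
            Complex.exp (Complex.I * ∑ x, (csrc (fun x y => g (x, y)) x : ℂ) * (θ x : ℂ)) :=
          tsum_congr hterm
      _ = ∑' n : V → V → ℕ, (wgt J n : ℂ) *
            Complex.exp (Complex.I * ∑ x, (csrc n x : ℂ) * (θ x : ℂ)) :=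
          (Equiv.curry V V ℕ).tsum_eq (fun n : V → V → ℕ => (wgt J n : ℂ) *
            Complex.exp (Complex.I * ∑ x, (csrc n x : ℂ) * (θ x : ℂ)))

end helpers

/-- Random current representation of the partition function:
`Z = Σ_{n : ∂n = 0} w_J(n)`. -/
theorem Z_eq_sum_sourceless (J : V → V → ℝ)
    (hsym : ∀ x y, J x y = J y x) (hpos : ∀ x y, 0 ≤ J x y)
    (hdiag : ∀ x, J x x = 0) :
    Z J = ∑' n : {n : V → V → ℕ // ∀ x, csrc n x = 0}, wgt J n.1 := by
  classical
  obtain ⟨hSw, _⟩ := expand_key J hsym hpos (fun _ => 0)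
  set C : ℝ := (2 * Real.pi) ^ (Fintype.card V) with hC
  have hCpos : 0 < C := by positivity
  have hw : ∀ n : V → V → ℕ, 0 ≤ wgt J n := by
    intro n
    refine Finset.prod_nonneg fun x _ => Finset.prod_nonneg fun y _ => ?_
    exact div_nonneg (pow_nonneg (div_nonneg (hpos x y) (by norm_num)) _) (by positivity)
  haveI : IsFiniteMeasure (volume.restrict (box V)) := by
    constructor
    rw [Measure.restrict_apply_univ, box_vol]
    exact ENNReal.pow_lt_top ENNReal.ofReal_lt_top
  set G : (V → V → ℕ) → (V → ℝ) → ℂ := fun n θ =>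
    (wgt J n : ℂ) * Complex.exp (Complex.I * ∑ x, (csrc n x : ℂ) * (θ x : ℂ)) with hG
  have hsumreal : ∀ (n : V → V → ℕ) (θ : V → ℝ),
      (∑ x, (csrc n x : ℂ) * (θ x : ℂ)) = ((∑ x, (csrc n x : ℝ) * θ x : ℝ) : ℂ) := by
    intro n θ
    push_cast
    rfl
  have hGnorm : ∀ n θ, ‖G n θ‖ = wgt J n := by
    intro n θ
    rw [hG]
    simp only []
    rw [norm_mul, Complex.norm_real, Real.norm_of_nonneg (hw n), hsumreal]
    have : ‖Complex.exp (Complex.I * ((∑ x, (csrc n x : ℝ) * θ x : ℝ) : ℂ))‖ = 1 := by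
      rw [Complex.norm_exp]
      simp [Complex.mul_re]
    rw [this, mul_one]
  have hGcont : ∀ n, Continuous (G n) := by
    intro n
    apply Continuous.mul continuous_const
    apply Complex.continuous_exp.comp
    apply Continuous.mul continuous_const
    refine continuous_finset_sum _ fun x _ => ?_
    exact continuous_const.mul (Complex.continuous_ofReal.comp (continuous_apply x))
  have hInt : ∀ n, Integrable (G n) (volume.restrict (box V)) := by
    intro n
    refine ⟨(hGcont n).aestronglyMeasurable, ?_⟩
    apply HasFiniteIntegral.of_bounded (C := wgt J n)
    exact Filter.Eventually.of_forall fun θ => le_of_eq (hGnorm n θ)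
  have hvolC : (volume (box V)).toReal = C := by
    rw [box_vol, hC]
    rw [← ENNReal.ofReal_pow (by positivity), ENNReal.toReal_ofReal (by positivity)]
  have hIntNorm : ∀ n, (∫ θ in box V, ‖G n θ‖) = wgt J n * C := by
    intro n
    rw [setIntegral_congr_fun box_meas fun θ _ => hGnorm n θ, setIntegral_const]
    rw [measureReal_def, hvolC, smul_eq_mul, mul_comm]
  have hSumNorm : Summable fun n => ∫ θ in box V, ‖G n θ‖ :=
    (hSw.mul_right C).congr fun n => (hIntNorm n).symm
  have hswap : (∑' n : V → V → ℕ, ∫ θ in box V, G n θ) = ∫ θ in box V, ∑' n, G n θ :=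
    integral_tsum_of_summable_integral_norm hInt hSumNorm
  have hpt : ∀ θ : V → ℝ, (∑' n, G n θ) = ((Real.exp (energy J θ) : ℝ) : ℂ) := by
    intro θ
    exact (expand_key J hsym hpos θ).2.symm
  have hGint : ∀ n, (∫ θ in box V, G n θ)
      = ((if (∀ x, csrc n x = 0) then wgt J n * C else 0 : ℝ) : ℂ) := by
    intro n
    rw [hG]
    simp only []
    rw [MeasureTheory.integral_const_mul, boxInt (csrc n)]
    by_cases h : ∀ x, csrc n x = 0
    · rw [if_pos h, if_pos h, Complex.ofReal_mul]
    · rw [if_neg h, if_neg h]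
      simp
  have hmain : ((∫ θ in box V, Real.exp (energy J θ) : ℝ) : ℂ)
      = ((∑' n : V → V → ℕ, if (∀ x, csrc n x = 0) then wgt J n * C else 0 : ℝ) : ℂ) := by
    calc ((∫ θ in box V, Real.exp (energy J θ) : ℝ) : ℂ)
        = ∫ θ in box V, ((Real.exp (energy J θ) : ℝ) : ℂ) := (integral_ofReal (𝕜 := ℂ)).symm
      _ = ∫ θ in box V, ∑' n, G n θ :=
          integral_congr_ae (Filter.Eventually.of_forall fun θ => (hpt θ).symm)
      _ = ∑' n, ∫ θ in box V, G n θ := hswap.symm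
      _ = ∑' n : V → V → ℕ, ((if (∀ x, csrc n x = 0) then wgt J n * C else 0 : ℝ) : ℂ) :=
          tsum_congr hGint
      _ = ((∑' n : V → V → ℕ, if (∀ x, csrc n x = 0) then wgt J n * C else 0 : ℝ) : ℂ) :=
          (Complex.ofReal_tsum _).symm
  have hreal : (∫ θ in box V, Real.exp (energy J θ))
      = ∑' n : V → V → ℕ, if (∀ x, csrc n x = 0) then wgt J n * C else 0 :=
    Complex.ofReal_inj.mp hmain
  have hfactor : (∑' n : V → V → ℕ, if (∀ x, csrc n x = 0) then wgt J n * C else 0)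
      = (∑' n : V → V → ℕ, {n : V → V → ℕ | ∀ x, csrc n x = 0}.indicator (wgt J) n) * C := by
    rw [← tsum_mul_right]
    refine tsum_congr fun n => ?_
    by_cases h : ∀ x, csrc n x = 0
    · rw [if_pos h, Set.indicator_of_mem (show n ∈ {n : V → V → ℕ | ∀ x, csrc n x = 0} from h)]
    · rw [if_neg h, Set.indicator_of_notMem (show n ∉ {n : V → V → ℕ | ∀ x, csrc n x = 0} from h), zero_mul]
  have hsub : (∑' n : {n : V → V → ℕ // ∀ x, csrc n x = 0}, wgt J n.1)
      = ∑' n : V → V → ℕ, {n : V → V → ℕ | ∀ x, csrc n x = 0}.indicator (wgt J) n :=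
    tsum_subtype {n : V → V → ℕ | ∀ x, csrc n x = 0} (wgt J)
  rw [Z, hreal, hfactor, ← hC, ← hsub, mul_div_assoc, div_self (ne_of_gt hCpos), mul_one]
end
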